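/- Let V be a flagged graded space over a field k of dimension n. Then the assignment (D,δ) ↦ d(D,δ) induces a bijection between the set of partial rulings of the associated graded ordered set X_V and the set of flag-decreasing differentials on V modulo conjugation by grading- and flag-preserving automorphisms of V; in particular the conjugation class of d(D,δ) is independent of the choice of homogeneous basis adapted to the flag. -/

import Mathlib

/-- A flagged graded space over `k`: a finite-dimensional ℤ-graded `k`-vector space
together with a complete flag of graded subspaces. -/
structure GFS (k : Type) [Field k] : Type 1 where
  V : Type
  [acg : AddCommGroup V]
  [mod : Module k V]
  [fd : FiniteDimensional k V]
  /-- the grading -/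
  gr : ℤ → Submodule k V
  /-- the graded pieces decompose `V` as an internal direct sum -/
  internal : DirectSum.IsInternal gr
  /-- the complete flag, `flag i = F_iV` (constant equal to `V` for `i ≥ dim V`) -/
  flag : ℕ → Submodule k V
  flag_mono : Monotone flag
  flag_rank : ∀ i, i ≤ Module.finrank k V → Module.finrank k (flag i) = i
  flag_top : ∀ i, Module.finrank k V ≤ i → flag i = ⊤
  /-- each flag subspace is a graded subspace -/
  flag_graded : ∀ i, flag i = ⨆ d : ℤ, flag i ⊓ gr d

attribute [instance] GFS.acg GFS.mod GFS.fd

namespace GFS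

variable {k : Type} [Field k]

/-- `φ` is homogeneous of degree `r`. -/
def degLE (A B : GFS k) (r : ℤ) (φ : A.V →ₗ[k] B.V) : Prop :=
  ∀ d : ℤ, (A.gr d).map φ ≤ B.gr (d + r)

/-- `φ` strictly decreases the flag: `φ(F_iV) ⊆ F_{i−1}V`. -/
def flagDecr (A : GFS k) (φ : A.V →ₗ[k] A.V) : Prop :=
  ∀ i : ℕ, (A.flag i).map φ ≤ A.flag (i - 1)

/-- `dd` is a flag-decreasing differential on `A`: degree `1`, squares to zero, and
strictly decreases the flag. -/
def IsDiff (A : GFS k) (dd : A.V →ₗ[k] A.V) : Prop :=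
  degLE A A 1 dd ∧ dd ∘ₗ dd = 0 ∧ flagDecr A dd

/-- `f : (A, dA) → (B, dB)` is a quasi-isomorphism: a degree-0 chain map inducing an
isomorphism on cohomology. -/
def IsQis (A B : GFS k) (dA : A.V →ₗ[k] A.V) (dB : B.V →ₗ[k] B.V)
    (f : A.V →ₗ[k] B.V) : Prop :=
  f ∘ₗ dA = dB ∘ₗ f ∧ degLE A B 0 f ∧
    (∀ b : B.V, dB b = 0 → ∃ a : A.V, dA a = 0 ∧ ∃ c, b - f a = dB c) ∧
    (∀ a : A.V, dA a = 0 → (∃ c, f a = dB c) → ∃ e, a = dA e)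

/-- A Hom-triple `(d_A, f, d_B)` from `A` to `B`, as raw data. -/
def IsTriple (A B : GFS k)
    (t : (A.V →ₗ[k] A.V) × (A.V →ₗ[k] B.V) × (B.V →ₗ[k] B.V)) : Prop :=
  IsDiff A t.1 ∧ IsDiff B t.2.2 ∧ IsQis A B t.1 t.2.2 t.2.1

/-- a grading-preserving automorphism -/
def presGr (A : GFS k) (g : A.V ≃ₗ[k] A.V) : Prop :=
  ∀ d : ℤ, (A.gr d).map (g : A.V →ₗ[k] A.V) = A.gr d

/-- a flag-preserving automorphism -/
def presFlag (A : GFS k) (g : A.V ≃ₗ[k] A.V) : Prop :=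
  ∀ i : ℕ, (A.flag i).map (g : A.V →ₗ[k] A.V) = A.flag i

/-- Equivalence of Hom-triples: grading- and flag-preserving automorphisms `φ, ψ`
intertwining the differentials, with `ψ∘f` chain homotopic to `f′∘φ`. -/
def TEquiv (A B : GFS k)
    (t t' : (A.V →ₗ[k] A.V) × (A.V →ₗ[k] B.V) × (B.V →ₗ[k] B.V)) : Prop :=
  ∃ (φ : A.V ≃ₗ[k] A.V) (ψ : B.V ≃ₗ[k] B.V),
    presGr A φ ∧ presFlag A φ ∧ presGr B ψ ∧ presFlag B ψ ∧
    (φ : A.V →ₗ[k] A.V) ∘ₗ t.1 = t'.1 ∘ₗ (φ : A.V →ₗ[k] A.V) ∧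
    (ψ : B.V →ₗ[k] B.V) ∘ₗ t.2.2 = t'.2.2 ∘ₗ (ψ : B.V →ₗ[k] B.V) ∧
    ∃ h : A.V →ₗ[k] B.V, degLE A B (-1) h ∧
      (ψ : B.V →ₗ[k] B.V) ∘ₗ t.2.1 - t'.2.1 ∘ₗ (φ : A.V →ₗ[k] A.V)
        = t'.2.2 ∘ₗ h + h ∘ₗ t.1

end GFS

namespace GFS

variable {k : Type} [Field k]

/-- `(D, δ)` is a partial ruling of the graded ordered set `(Fin n, deg)`
(`δ` is a total function, constrained only on `D`). -/
def IsPR (n : ℕ) (deg : Fin n → ℤ) (D : Finset (Fin n)) (δ : Fin n → Fin n) : Prop :=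
  (∀ x ∈ D, δ x ∉ D) ∧ (∀ x ∈ D, ∀ y ∈ D, δ x = δ y → x = y) ∧
    (∀ x ∈ D, δ x < x ∧ deg (δ x) = deg x + 1)

/-- The differential `d(D,δ)` determined by a partial ruling and a homogeneous basis
adapted to the flag: `d (b x) = b (δ x)` for `x ∈ D` and `d (b x) = 0` otherwise. -/
noncomputable def dOf {A : GFS k} {n : ℕ} (b : Module.Basis (Fin n) k A.V)
    (D : Finset (Fin n)) (δ : Fin n → Fin n) : A.V →ₗ[k] A.V :=
  b.constr k (fun x => if x ∈ D then b (δ x) else 0)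

/-- `d` and `d'` are conjugate by a grading- and flag-preserving automorphism of `A`. -/
def ConjDiff (A : GFS k) (d d' : A.V →ₗ[k] A.V) : Prop :=
  ∃ g : A.V ≃ₗ[k] A.V, presGr A g ∧ presFlag A g ∧
    (g : A.V →ₗ[k] A.V) ∘ₗ d = d' ∘ₗ (g : A.V →ₗ[k] A.V)

end GFS

open GFS

open Submodule Module

namespace GFS
variable {k : Type} [Field k] {A : GFS k} {n : ℕ}

lemma indep_of_triangular (c : Fin n → A.V)
    (h1 : ∀ z : Fin n, c z ∈ A.flag ((z : ℕ)+1)) (h2 : ∀ z : Fin n, c z ∉ A.flag (z : ℕ)) :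
    LinearIndependent k c := by
  rw [linearIndependent_iff']
  intro s
  induction s using Finset.strongInduction with
  | _ s ih =>
    intro g hs i hi
    have hne : s.Nonempty := ⟨i, hi⟩
    set z := s.max' hne with hz
    have hmem : ∀ j ∈ s.erase z, c j ∈ A.flag (z : ℕ) := by
      intro j hj
      have hjz : j < z := lt_of_le_of_ne (Finset.le_max' s j (Finset.mem_of_mem_erase hj))
        (Finset.ne_of_mem_erase hj)
      exact A.flag_mono (Nat.succ_le_of_lt hjz) (h1 j)
    have hgz : g z = 0 := by
      by_contra hgz
      apply h2 z
      have hsum : g z • c z + ∑ j ∈ s.erase z, g j • c j = 0 := by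
        rw [Finset.add_sum_erase s (fun j => g j • c j) (s.max'_mem hne)]; exact hs
      have hcz : c z = (g z)⁻¹ • (- ∑ j ∈ s.erase z, g j • c j) := by
        rw [eq_inv_smul_iff₀ hgz, eq_neg_iff_add_eq_zero]; exact hsum
      rw [hcz]
      exact Submodule.smul_mem _ _ (Submodule.neg_mem _ (Submodule.sum_mem _ (fun j hj => Submodule.smul_mem _ _ (hmem j hj))))
    have hrest : ∑ j ∈ s.erase z, g j • c j = 0 := by
      have hsum : g z • c z + ∑ j ∈ s.erase z, g j • c j = 0 := by
        rw [Finset.add_sum_erase s (fun j => g j • c j) (s.max'_mem hne)]; exact hs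
      rw [hgz, zero_smul, zero_add] at hsum; exact hsum
    rcases eq_or_ne i z with rfl | hiz
    · exact hgz
    · exact ih (s.erase z) (Finset.erase_ssubset (s.max'_mem hne)) g hrest i
        (Finset.mem_erase.mpr ⟨hiz, hi⟩)

lemma card_filter_lt {n i : ℕ} (h : i ≤ n) :
    (Finset.univ.filter (fun x : Fin n => (x : ℕ) < i)).card = i := by
  rw [show Finset.univ.filter (fun x : Fin n => (x : ℕ) < i)
      = Finset.univ.image (fun j : Fin i => Fin.castLE h j) from ?_]
  · rw [Finset.card_image_of_injective _ (Fin.castLE_injective h), Finset.card_univ,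
      Fintype.card_fin]
  · ext x
    simp only [Finset.mem_filter, Finset.mem_univ, true_and, Finset.mem_image]
    constructor
    · intro hx; exact ⟨⟨x, hx⟩, rfl⟩
    · rintro ⟨j, rfl⟩; exact j.2

lemma finrank_span_image_finset (c : Fin n → A.V) (hli : LinearIndependent k c)
    (s : Finset (Fin n)) :
    Module.finrank k (span k (c '' ↑s)) = s.card := by
  have h1 : LinearIndependent k (fun x : {y // y ∈ s} => c x) :=
    hli.comp _ Subtype.val_injective
  have h2 := finrank_span_eq_card h1
  rw [Fintype.card_coe] at h2
  have hr : (Set.range fun x : {y // y ∈ s} => c ↑x) = c '' ↑s := by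
    rw [show (fun x : {y // y ∈ s} => c ↑x) = c ∘ Subtype.val from rfl, Set.range_comp,
      Subtype.range_coe]
  rw [← hr, h2]

lemma flag_eq_span_prefix (c : Fin n → A.V) (hn : Module.finrank k A.V = n)
    (h1 : ∀ z : Fin n, c z ∈ A.flag ((z : ℕ)+1)) (h2 : ∀ z : Fin n, c z ∉ A.flag (z : ℕ))
    (i : ℕ) :
    A.flag i = span k (c '' {x : Fin n | (x : ℕ) < i}) := by
  have hli := indep_of_triangular c h1 h2
  have hset : ∀ j : ℕ, {x : Fin n | (x : ℕ) < j}
      = ↑(Finset.univ.filter (fun x : Fin n => (x : ℕ) < j)) := by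
    intro j; ext x; simp
  have hle : ∀ j : ℕ, span k (c '' {x : Fin n | (x : ℕ) < j}) ≤ A.flag j := by
    intro j
    rw [span_le]
    rintro - ⟨x, hx, rfl⟩
    exact A.flag_mono (Nat.succ_le_of_lt hx) (h1 x)
  rcases le_or_gt i n with hi | hi
  · refine (Submodule.eq_of_le_of_finrank_eq (hle i) ?_).symm
    rw [A.flag_rank i (hn ▸ hi), hset i, finrank_span_image_finset c hli, card_filter_lt hi]
  · have hu : {x : Fin n | (x : ℕ) < i} = {x : Fin n | (x : ℕ) < n} := by
      ext x; simp only [Set.mem_setOf_eq, x.2, iff_true]; exact lt_of_lt_of_le x.2 hi.le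
    rw [hu, A.flag_top i (hn ▸ hi.le)]
    have := flag_top A n (hn ▸ le_refl n)
    rw [← this]
    refine (Submodule.eq_of_le_of_finrank_eq (hle n) ?_).symm
    rw [A.flag_rank n (hn ▸ le_refl n), hset n, finrank_span_image_finset c hli,
      card_filter_lt (le_refl n)]

/-- the triangular family as a basis -/
noncomputable def triBasis (c : Fin n → A.V) (hn : Module.finrank k A.V = n)
    (h1 : ∀ z : Fin n, c z ∈ A.flag ((z : ℕ)+1)) (h2 : ∀ z : Fin n, c z ∉ A.flag (z : ℕ)) :
    Basis (Fin n) k A.V :=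
  Basis.mk (indep_of_triangular c h1 h2) (by
    have hu : {x : Fin n | (x : ℕ) < n} = Set.univ := by
      ext x; simp [x.2]
    have := flag_eq_span_prefix c hn h1 h2 n
    rw [hu, Set.image_univ, A.flag_top n (hn ▸ le_refl n)] at this
    exact this.le)

@[simp] lemma triBasis_apply (c : Fin n → A.V) (hn : Module.finrank k A.V = n)
    (h1 : ∀ z : Fin n, c z ∈ A.flag ((z : ℕ)+1)) (h2 : ∀ z : Fin n, c z ∉ A.flag (z : ℕ))
    (z : Fin n) : triBasis c hn h1 h2 z = c z := by
  simp [triBasis]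

lemma gr_eq_span (c : Basis (Fin n) k A.V) (degc : Fin n → ℤ)
    (hc : ∀ x, c x ∈ A.gr (degc x)) (e : ℤ) :
    A.gr e = span k (⇑c '' {x : Fin n | degc x = e}) := by
  classical
  refine le_antisymm ?_ ?_
  swap
  · rw [span_le]
    rintro - ⟨x, hx, rfl⟩
    have : degc x = e := hx
    exact this ▸ hc x
  · intro v hv
    set r : Fin n → k := fun x => c.repr v x with hr
    set s : Finset ℤ := Finset.univ.image degc with hs
    set vd : ℤ → A.V := fun d =>
      ∑ x ∈ Finset.univ.filter (fun x => degc x = d), r x • c x with hvd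
    have hvsum : ∑ d ∈ s, vd d = v := by
      rw [hvd, Finset.sum_fiberwise_of_maps_to
        (fun x _ => Finset.mem_image_of_mem degc (Finset.mem_univ x))]
      exact c.sum_repr v
    have hvd_span : ∀ d, vd d ∈ span k (⇑c '' {x : Fin n | degc x = d}) := by
      intro d
      refine Submodule.sum_mem _ (fun x hx => Submodule.smul_mem _ _ (subset_span ?_))
      exact ⟨x, (Finset.mem_filter.mp hx).2, rfl⟩
    have hvd_gr : ∀ d, vd d ∈ A.gr d := by
      intro d
      refine Submodule.sum_mem _ (fun x hx => Submodule.smul_mem _ _ ?_)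
      have : degc x = d := (Finset.mem_filter.mp hx).2
      exact this ▸ hc x
    have hveq : v - vd e = ∑ d ∈ s.erase e, vd d := by
      rcases em (e ∈ s) with he | he
      · rw [Finset.sum_erase_eq_sub he, hvsum]
      · have h0 : vd e = 0 := by
          rw [hvd]
          refine Finset.sum_eq_zero (fun x hx => ?_)
          exact absurd (Finset.mem_image_of_mem degc (Finset.mem_univ x))
            ((Finset.mem_filter.mp hx).2 ▸ he)
        rw [h0, sub_zero, Finset.erase_eq_of_notMem he, ← hvsum]
    have hmem1 : v - vd e ∈ A.gr e := sub_mem hv (hvd_gr e)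
    have hmem2 : v - vd e ∈ ⨆ d ∈ s.erase e, A.gr d := by
      rw [hveq]
      refine Submodule.sum_mem _ (fun d hd => ?_)
      exact Submodule.mem_iSup_of_mem d (Submodule.mem_iSup_of_mem hd (hvd_gr d))
    have hdisj : Disjoint (A.gr e) (⨆ d ∈ s.erase e, A.gr d) :=
      (A.internal.submodule_iSupIndep).disjoint_biSup (Finset.notMem_erase e s)
    have hz : v - vd e = 0 := Submodule.disjoint_def.mp hdisj _ hmem1 hmem2
    have : v = vd e := by rw [sub_eq_zero] at hz; exact hz
    exact this ▸ hvd_span e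

lemma setOf_eq_coe_filter (P : Fin n → Prop) [DecidablePred P] :
    {x : Fin n | P x} = ↑(Finset.univ.filter P) := by ext x; simp

lemma flag_inf_gr (c : Basis (Fin n) k A.V) (degc : Fin n → ℤ)
    (hc : ∀ x, c x ∈ A.gr (degc x))
    (hadapt : ∀ i : ℕ, A.flag i = span k (⇑c '' {x : Fin n | (x : ℕ) < i}))
    (i : ℕ) (e : ℤ) :
    A.flag i ⊓ A.gr e = span k (⇑c '' {x : Fin n | (x : ℕ) < i ∧ degc x = e}) := by
  refine le_antisymm ?_ ?_
  · intro v hv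
    rw [Submodule.mem_inf] at hv
    obtain ⟨hv1, hv2⟩ := hv
    rw [hadapt i, c.mem_span_image] at hv1
    rw [gr_eq_span c degc hc e, c.mem_span_image] at hv2
    rw [c.mem_span_image]
    intro x hx
    exact ⟨hv1 hx, hv2 hx⟩
  · rw [span_le]
    rintro - ⟨x, ⟨hx1, hx2⟩, rfl⟩
    refine ⟨?_, hx2 ▸ hc x⟩
    rw [hadapt i]
    exact subset_span ⟨x, hx1, rfl⟩

lemma filter_lt_succ_card (P : Fin n → Prop) [DecidablePred P] (x : Fin n) :
    (Finset.univ.filter (fun z : Fin n => (z : ℕ) < (x : ℕ) + 1 ∧ P z)).card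
      = (Finset.univ.filter (fun z : Fin n => (z : ℕ) < (x : ℕ) ∧ P z)).card
        + (if P x then 1 else 0) := by
  classical
  have hsplit : Finset.univ.filter (fun z : Fin n => (z : ℕ) < (x : ℕ) + 1 ∧ P z)
      = Finset.univ.filter (fun z : Fin n => (z : ℕ) < (x : ℕ) ∧ P z)
        ∪ Finset.univ.filter (fun z : Fin n => z = x ∧ P z) := by
    ext z
    simp only [Finset.mem_filter, Finset.mem_univ, true_and, Finset.mem_union]
    constructor
    · rintro ⟨hz, hP⟩
      rcases Nat.lt_succ_iff_lt_or_eq.mp hz with h | h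
      · exact Or.inl ⟨h, hP⟩
      · exact Or.inr ⟨Fin.ext h, hP⟩
    · rintro (⟨hz, hP⟩ | ⟨rfl, hP⟩)
      · exact ⟨Nat.lt_succ_of_lt hz, hP⟩
      · exact ⟨Nat.lt_succ_self _, hP⟩
  have hdisj : Disjoint (Finset.univ.filter (fun z : Fin n => (z : ℕ) < (x : ℕ) ∧ P z))
      (Finset.univ.filter (fun z : Fin n => z = x ∧ P z)) := by
    rw [Finset.disjoint_filter]
    rintro z - ⟨hz, -⟩ ⟨rfl, -⟩
    exact lt_irrefl _ hz
  have hlast : (Finset.univ.filter (fun z : Fin n => z = x ∧ P z)).card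
      = if P x then 1 else 0 := by
    rcases em (P x) with h | h
    · rw [if_pos h]
      rw [show Finset.univ.filter (fun z : Fin n => z = x ∧ P z) = {x} from ?_]
      · exact Finset.card_singleton x
      · ext z; simp only [Finset.mem_filter, Finset.mem_univ, true_and, Finset.mem_singleton]
        exact ⟨fun ⟨h1, _⟩ => h1, fun h1 => ⟨h1, h1 ▸ h⟩⟩
    · rw [if_neg h]
      rw [show Finset.univ.filter (fun z : Fin n => z = x ∧ P z) = ∅ from ?_]
      · exact Finset.card_empty
      · ext z; simp only [Finset.mem_filter, Finset.mem_univ, true_and,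
          Finset.notMem_empty, iff_false]
        rintro ⟨rfl, hP⟩; exact h hP
  rw [hsplit, Finset.card_union_of_disjoint hdisj, hlast]

lemma deg_determined (c c' : Basis (Fin n) k A.V) (degc degc' : Fin n → ℤ)
    (hc : ∀ x, c x ∈ A.gr (degc x)) (hc' : ∀ x, c' x ∈ A.gr (degc' x))
    (hadapt : ∀ i : ℕ, A.flag i = span k (⇑c '' {x : Fin n | (x : ℕ) < i}))
    (hadapt' : ∀ i : ℕ, A.flag i = span k (⇑c' '' {x : Fin n | (x : ℕ) < i}))
    (x : Fin n) : degc' x = degc x := by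
  classical
  have hcard : ∀ (i : ℕ) (e : ℤ),
      (Finset.univ.filter (fun z : Fin n => (z : ℕ) < i ∧ degc z = e)).card
        = (Finset.univ.filter (fun z : Fin n => (z : ℕ) < i ∧ degc' z = e)).card := by
    intro i e
    have h1 := flag_inf_gr c degc hc hadapt i e
    have h2 := flag_inf_gr c' degc' hc' hadapt' i e
    have h3 : span k (⇑c '' {z : Fin n | (z : ℕ) < i ∧ degc z = e})
        = span k (⇑c' '' {z : Fin n | (z : ℕ) < i ∧ degc' z = e}) := h1 ▸ h2
    have h4 := congrArg (fun W : Submodule k A.V => Module.finrank k W) h3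
    rw [setOf_eq_coe_filter, setOf_eq_coe_filter,
      finrank_span_image_finset _ c.linearIndependent,
      finrank_span_image_finset _ c'.linearIndependent] at h4
    exact h4
  have h1 := hcard ((x : ℕ) + 1) (degc x)
  rw [filter_lt_succ_card, filter_lt_succ_card, hcard (x : ℕ) (degc x)] at h1
  by_contra hne
  rw [if_pos rfl, if_neg hne] at h1
  omega

lemma dOf_apply (b : Basis (Fin n) k A.V) (D : Finset (Fin n)) (δ : Fin n → Fin n)
    (x : Fin n) : dOf b D δ (b x) = if x ∈ D then b (δ x) else 0 := by
  rw [dOf, b.constr_basis]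

lemma dOf_isDiff (b : Basis (Fin n) k A.V) (degb : Fin n → ℤ)
    (hhom : ∀ x, b x ∈ A.gr (degb x))
    (hadapt : ∀ i : ℕ, A.flag i = span k (⇑b '' {x : Fin n | (x : ℕ) < i}))
    (D : Finset (Fin n)) (δ : Fin n → Fin n) (hpr : IsPR n degb D δ) :
    IsDiff A (dOf b D δ) := by
  obtain ⟨h1, h2, h3⟩ := hpr
  refine ⟨?_, ?_, ?_⟩
  · intro e
    rw [gr_eq_span b degb hhom e, Submodule.map_span, ← Set.image_comp]
    rw [span_le]
    rintro - ⟨x, hx, rfl⟩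
    simp only [Function.comp_apply, dOf_apply]
    split_ifs with hD
    · have hde : degb (δ x) = e + 1 := by rw [(h3 x hD).2, hx]
      exact SetLike.mem_coe.mpr (hde ▸ hhom (δ x))
    · exact SetLike.mem_coe.mpr (Submodule.zero_mem _)
  · apply b.ext
    intro x
    rw [LinearMap.comp_apply, dOf_apply]
    split_ifs with hD
    · rw [dOf_apply, if_neg (h1 x hD), LinearMap.zero_apply]
    · rw [map_zero, LinearMap.zero_apply]
  · intro i
    rw [hadapt i, Submodule.map_span, ← Set.image_comp, span_le]
    rintro - ⟨x, hx, rfl⟩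
    simp only [Function.comp_apply, dOf_apply]
    split_ifs with hD
    · rw [SetLike.mem_coe, hadapt (i - 1)]
      refine subset_span ⟨δ x, ?_, rfl⟩
      have hlt : (δ x : ℕ) < (x : ℕ) := (h3 x hD).1
      have hxi : (x : ℕ) < i := hx
      simp only [Set.mem_setOf_eq]
      omega
    · exact SetLike.mem_coe.mpr (Submodule.zero_mem _)

lemma dOf_conj_of_bases (b b' : Basis (Fin n) k A.V) (degb degb' : Fin n → ℤ)
    (hhom : ∀ x, b x ∈ A.gr (degb x)) (hhom' : ∀ x, b' x ∈ A.gr (degb' x))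
    (hadapt : ∀ i : ℕ, A.flag i = span k (⇑b '' {x : Fin n | (x : ℕ) < i}))
    (hadapt' : ∀ i : ℕ, A.flag i = span k (⇑b' '' {x : Fin n | (x : ℕ) < i}))
    (D : Finset (Fin n)) (δ : Fin n → Fin n) :
    ConjDiff A (dOf b D δ) (dOf b' D δ) := by
  have hdeg : ∀ x, degb' x = degb x :=
    deg_determined b b' degb degb' hhom hhom' hadapt hadapt'
  set g : A.V ≃ₗ[k] A.V := b.equiv b' (Equiv.refl _) with hg
  have hgb : ∀ x, g (b x) = b' x := by
    intro x; rw [hg, b.equiv_apply]; rfl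
  refine ⟨g, ?_, ?_, ?_⟩
  · intro e
    have himg : (⇑(g : A.V →ₗ[k] A.V) ∘ ⇑b) '' {x : Fin n | degb x = e}
        = ⇑b' '' {x : Fin n | degb x = e} :=
      Set.image_congr (fun x _ => hgb x)
    have hfin : span k (⇑b' '' {x : Fin n | degb x = e}) = A.gr e := by
      have hss : {x : Fin n | degb x = e} = {x : Fin n | degb' x = e} := by
        ext x; simp only [Set.mem_setOf_eq, hdeg x]
      rw [gr_eq_span b' degb' hhom' e, hss]
    conv_lhs => rw [gr_eq_span b degb hhom e]
    rw [Submodule.map_span, ← Set.image_comp, himg, hfin]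
  · intro i
    have himg : (⇑(g : A.V →ₗ[k] A.V) ∘ ⇑b) '' {x : Fin n | (x : ℕ) < i}
        = ⇑b' '' {x : Fin n | (x : ℕ) < i} :=
      Set.image_congr (fun x _ => hgb x)
    conv_lhs => rw [hadapt i]
    rw [Submodule.map_span, ← Set.image_comp, himg, ← hadapt' i]
  · apply b.ext
    intro x
    rw [LinearMap.comp_apply, LinearMap.comp_apply, LinearEquiv.coe_coe, dOf_apply, hgb x,
      dOf_apply]
    split_ifs with hD
    · exact hgb (δ x)
    · exact map_zero _

lemma rank_inv_conj (d d' : A.V →ₗ[k] A.V) (h : ConjDiff A d d') (i j : ℕ) :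
    Module.finrank k ↥((A.flag i).map d ⊔ A.flag j)
      = Module.finrank k ↥((A.flag i).map d' ⊔ A.flag j) := by
  obtain ⟨g, hgr, hfl, hcomm⟩ := h
  have h1 : (A.flag i).map d' ⊔ A.flag j
      = ((A.flag i).map d ⊔ A.flag j).map (g : A.V →ₗ[k] A.V) := by
    rw [Submodule.map_sup, hfl j]
    congr 1
    conv_lhs => rw [← hfl i]
    rw [← Submodule.map_comp, ← hcomm, Submodule.map_comp]
  rw [h1, LinearEquiv.finrank_map_eq]

lemma rank_inv_dOf (b : Basis (Fin n) k A.V) (degb : Fin n → ℤ)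
    (hadapt : ∀ i : ℕ, A.flag i = span k (⇑b '' {x : Fin n | (x : ℕ) < i}))
    (D : Finset (Fin n)) (δ : Fin n → Fin n) (hpr : IsPR n degb D δ) (i j : ℕ) :
    Module.finrank k ↥((A.flag i).map (dOf b D δ) ⊔ A.flag j)
      = (Finset.univ.filter (fun z : Fin n => (z : ℕ) < j)).card
        + (D.filter (fun x : Fin n => (x : ℕ) < i ∧ j ≤ ((δ x : ℕ)))).card := by
  classical
  set T1 : Finset (Fin n) := (D.filter (fun x : Fin n => (x : ℕ) < i)).image δ with hT1
  set T2 : Finset (Fin n) := Finset.univ.filter (fun z : Fin n => (z : ℕ) < j) with hT2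
  have hmap : (A.flag i).map (dOf b D δ) = span k (⇑b '' ↑T1) := by
    conv_lhs => rw [hadapt i]
    rw [Submodule.map_span, ← Set.image_comp]
    refine le_antisymm ?_ ?_
    · rw [span_le]
      rintro - ⟨x, hx, rfl⟩
      simp only [Function.comp_apply, dOf_apply]
      split_ifs with hD
      · refine SetLike.mem_coe.mpr (subset_span ⟨δ x, ?_, rfl⟩)
        exact Finset.mem_coe.mpr (Finset.mem_image_of_mem δ (Finset.mem_filter.mpr ⟨hD, hx⟩))
      · exact SetLike.mem_coe.mpr (Submodule.zero_mem _)
    · rw [span_le]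
      rintro - ⟨z, hz, rfl⟩
      obtain ⟨x, hx, rfl⟩ := Finset.mem_image.mp (Finset.mem_coe.mp hz)
      obtain ⟨hxD, hxi⟩ := Finset.mem_filter.mp hx
      refine SetLike.mem_coe.mpr (subset_span ⟨x, hxi, ?_⟩)
      simp only [Function.comp_apply, dOf_apply, if_pos hxD]
  have hsup : (A.flag i).map (dOf b D δ) ⊔ A.flag j = span k (⇑b '' ↑(T1 ∪ T2)) := by
    rw [hmap, hadapt j, setOf_eq_coe_filter, ← hT2, Finset.coe_union, Set.image_union,
      Submodule.span_union]
  rw [hsup, finrank_span_image_finset _ b.linearIndependent]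
  have hcard : (T1 ∪ T2).card = T2.card + (T1 \ T2).card := by
    rw [← Finset.card_sdiff_add_card]
    omega
  rw [hcard]
  congr 1
  have hTd : T1 \ T2 = (D.filter (fun x : Fin n => (x : ℕ) < i ∧ j ≤ ((δ x : ℕ)))).image δ := by
    ext z
    simp only [hT1, hT2, Finset.mem_sdiff, Finset.mem_image, Finset.mem_filter,
      Finset.mem_univ, true_and, not_lt]
    constructor
    · rintro ⟨⟨x, ⟨hxD, hxi⟩, rfl⟩, hj⟩
      exact ⟨x, ⟨hxD, hxi, hj⟩, rfl⟩
    · rintro ⟨x, ⟨hxD, hxi, hj⟩, rfl⟩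
      exact ⟨⟨x, ⟨hxD, hxi⟩, rfl⟩, hj⟩
  rw [hTd, Finset.card_image_of_injOn]
  intro x hx y hy hxy
  exact hpr.2.1 x (Finset.mem_filter.mp hx).1 y (Finset.mem_filter.mp hy).1 hxy

lemma cnt_succ (D : Finset (Fin n)) (δ : Fin n → Fin n) (x : Fin n) (j : ℕ) :
    (D.filter (fun z : Fin n => (z : ℕ) < (x : ℕ) + 1 ∧ j ≤ ((δ z : ℕ)))).card
      = (D.filter (fun z : Fin n => (z : ℕ) < (x : ℕ) ∧ j ≤ ((δ z : ℕ)))).card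
        + (if x ∈ D ∧ j ≤ ((δ x : ℕ)) then 1 else 0) := by
  classical
  have h1 : ∀ i : ℕ, D.filter (fun z : Fin n => (z : ℕ) < i ∧ j ≤ ((δ z : ℕ)))
      = Finset.univ.filter (fun z : Fin n => (z : ℕ) < i ∧ (z ∈ D ∧ j ≤ ((δ z : ℕ)))) := by
    intro i
    ext z
    simp only [Finset.mem_filter, Finset.mem_univ, true_and]
    tauto
  rw [h1, h1, filter_lt_succ_card (fun z : Fin n => z ∈ D ∧ j ≤ ((δ z : ℕ))) x]

lemma pr_inj (b : Basis (Fin n) k A.V) (degb : Fin n → ℤ)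
    (hadapt : ∀ i : ℕ, A.flag i = span k (⇑b '' {x : Fin n | (x : ℕ) < i}))
    (D D' : Finset (Fin n)) (δ δ' : Fin n → Fin n)
    (hpr : IsPR n degb D δ) (hpr' : IsPR n degb D' δ')
    (hconj : ConjDiff A (dOf b D δ) (dOf b D' δ')) :
    D = D' ∧ ∀ x ∈ D, δ x = δ' x := by
  classical
  have hcnt : ∀ i j : ℕ, (D.filter (fun x : Fin n => (x : ℕ) < i ∧ j ≤ ((δ x : ℕ)))).card
      = (D'.filter (fun x : Fin n => (x : ℕ) < i ∧ j ≤ ((δ' x : ℕ)))).card := by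
    intro i j
    have e1 := rank_inv_dOf b degb hadapt D δ hpr i j
    have e2 := rank_inv_dOf b degb hadapt D' δ' hpr' i j
    have e3 := rank_inv_conj _ _ hconj i j
    omega
  have hD : D = D' := by
    ext x
    have h := hcnt ((x : ℕ) + 1) 0
    rw [cnt_succ, cnt_succ, hcnt (x : ℕ) 0] at h
    simp only [Nat.zero_le, and_true] at h
    split_ifs at h with h1 h2 <;> first | tauto | omega
  refine ⟨hD, fun x hx => ?_⟩
  have hx' : x ∈ D' := hD ▸ hx
  have hval : ∀ j : ℕ, j ≤ ((δ x : ℕ)) ↔ j ≤ ((δ' x : ℕ)) := by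
    intro j
    have h := hcnt ((x : ℕ) + 1) j
    rw [cnt_succ, cnt_succ, hcnt (x : ℕ) j] at h
    split_ifs at h with h1 h2 <;> first | tauto | omega
  exact Fin.ext (le_antisymm ((hval _).mp le_rfl) ((hval _).mpr le_rfl))

lemma mem_flag_iff_repr (C : Basis (Fin n) k A.V)
    (hadaptC : ∀ i : ℕ, A.flag i = span k (⇑C '' {z : Fin n | (z : ℕ) < i}))
    (v : A.V) (i : ℕ) :
    v ∈ A.flag i ↔ ∀ z : Fin n, C.repr v z ≠ 0 → (z : ℕ) < i := by
  rw [hadaptC i, C.mem_span_image]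
  constructor
  · intro h z hz
    exact h (Finsupp.mem_support_iff.mpr hz)
  · intro h z hz
    exact h z (Finsupp.mem_support_iff.mp hz)

lemma mem_gr_iff_repr (C : Basis (Fin n) k A.V) (degc : Fin n → ℤ)
    (hhom : ∀ z, C z ∈ A.gr (degc z)) (v : A.V) (e : ℤ) :
    v ∈ A.gr e ↔ ∀ z : Fin n, C.repr v z ≠ 0 → degc z = e := by
  rw [gr_eq_span C degc hhom e, C.mem_span_image]
  constructor
  · intro h z hz
    exact h (Finsupp.mem_support_iff.mpr hz)
  · intro h z hz
    exact h z (Finsupp.mem_support_iff.mp hz)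

/-- invariant for the normal-form construction after `m` steps -/
def Good (A : GFS k) (n : ℕ) (degb : Fin n → ℤ) (m : ℕ) (d : A.V →ₗ[k] A.V)
    (c : Fin n → A.V) (D : Finset (Fin n)) (δ : Fin n → Fin n) : Prop :=
  (∀ z : Fin n, c z ∈ A.gr (degb z)) ∧
  (∀ z : Fin n, c z ∈ A.flag ((z : ℕ) + 1)) ∧
  (∀ z : Fin n, c z ∉ A.flag (z : ℕ)) ∧
  IsPR n degb D δ ∧
  (∀ z ∈ D, (z : ℕ) < m) ∧
  (∀ z : Fin n, (z : ℕ) < m → d (c z) = if z ∈ D then c (δ z) else 0)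

lemma good_zero (b : Basis (Fin n) k A.V) (degb : Fin n → ℤ)
    (hhom : ∀ x, b x ∈ A.gr (degb x))
    (hadapt : ∀ i : ℕ, A.flag i = span k (⇑b '' {x : Fin n | (x : ℕ) < i}))
    (d : A.V →ₗ[k] A.V) :
    Good A n degb 0 d (⇑b) ∅ id := by
  refine ⟨hhom, ?_, ?_, ?_, ?_, ?_⟩
  · intro z
    rw [hadapt ((z : ℕ) + 1)]
    exact subset_span ⟨z, Nat.lt_succ_self _, rfl⟩
  · intro z hz
    rw [hadapt (z : ℕ)] at hz
    exact b.linearIndependent.notMem_span_image (by simp) hz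
  · exact ⟨fun x hx => absurd hx (Finset.notMem_empty x),
      fun x hx => absurd hx (Finset.notMem_empty x),
      fun x hx => absurd hx (Finset.notMem_empty x)⟩
  · exact fun z hz => absurd hz (Finset.notMem_empty z)
  · intro z hz
    exact absurd hz (Nat.not_lt_zero _)

lemma good_step (d : A.V →ₗ[k] A.V) (hd : IsDiff A d) (hn : Module.finrank k A.V = n)
    (degb : Fin n → ℤ) (m : ℕ) (hm : m < n) (c : Fin n → A.V) (D : Finset (Fin n))
    (δ : Fin n → Fin n) (hG : Good A n degb m d c D δ) :
    ∃ c' D' δ', Good A n degb (m + 1) d c' D' δ' := by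
  classical
  obtain ⟨hc1, hc2, hc3, hpr, hDm, hrel⟩ := hG
  set x : Fin n := ⟨m, hm⟩ with hx
  set C : Basis (Fin n) k A.V := triBasis c hn hc2 hc3 with hC
  have hC_coe : ⇑C = c := funext (triBasis_apply c hn hc2 hc3)
  have hadaptC : ∀ i : ℕ, A.flag i = span k (⇑C '' {z : Fin n | (z : ℕ) < i}) := by
    intro i
    rw [hC_coe]
    exact flag_eq_span_prefix c hn hc2 hc3 i
  have hhomC : ∀ z, C z ∈ A.gr (degb z) := by
    intro z; rw [hC_coe]; exact hc1 z
  have hmemflag := mem_flag_iff_repr C hadaptC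
  have hmemgr := mem_gr_iff_repr C degb hhomC
  set w : A.V := d (c x) with hw
  have hw_flag : w ∈ A.flag m := by
    have h1 := hd.2.2 (m + 1)
    have h2 : w ∈ (A.flag (m + 1)).map d :=
      Submodule.mem_map_of_mem (show c x ∈ A.flag (m + 1) from hc2 x)
    simpa using h1 h2
  have hw_gr : w ∈ A.gr (degb x + 1) := hd.1 (degb x) ⟨c x, hc1 x, rfl⟩
  set a := C.repr w with ha
  have ha_lt : ∀ z, a z ≠ 0 → (z : ℕ) < m := (hmemflag w m).mp hw_flag
  have ha_deg : ∀ z, a z ≠ 0 → degb z = degb x + 1 := (hmemgr w _).mp hw_gr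
  have hdd : ∀ v : A.V, d (d v) = 0 := by
    intro v
    have := DFunLike.congr_fun hd.2.1 v
    simpa using this
  -- coefficients on D vanish (uses d² = 0)
  have hw_sum : ∑ z : Fin n, a z • c z = w := by
    have h := C.sum_repr w
    rw [hC_coe] at h
    exact h
  have ha_D : ∀ z ∈ D, a z = 0 := by
    intro z₁ hz₁
    have h0 : ∑ z : Fin n, a z • d (c z) = 0 := by
      rw [show ∑ z : Fin n, a z • d (c z) = d (∑ z : Fin n, a z • c z) by
        rw [map_sum]; exact Finset.sum_congr rfl (fun z _ => (map_smul d _ _).symm)]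
      rw [hw_sum, hw, hdd]
    have h1 : ∑ z : Fin n, a z • (if z ∈ D then c (δ z) else 0) = 0 := by
      have hcg : ∑ z : Fin n, a z • (if z ∈ D then c (δ z) else 0)
          = ∑ z : Fin n, a z • d (c z) := by
        refine Finset.sum_congr rfl (fun z _ => ?_)
        rcases eq_or_ne (a z) 0 with h | h
        · rw [h, zero_smul, zero_smul]
        · rw [hrel z (ha_lt z h)]
      rw [hcg, h0]
    have h2 : ∑ z ∈ D, a z • c (δ z) = 0 := by
      rw [← h1]
      rw [show ∑ z : Fin n, a z • (if z ∈ D then c (δ z) else 0)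
          = ∑ z : Fin n, (if z ∈ D then a z • c (δ z) else 0) by
        refine Finset.sum_congr rfl (fun z _ => ?_)
        split_ifs with h
        · rfl
        · rw [smul_zero]]
      rw [Finset.sum_ite_mem, Finset.univ_inter]
    have h3 := congrArg (fun v => C.repr v (δ z₁)) h2
    simp only [map_sum, map_smul, map_zero, Finsupp.coe_zero, Pi.zero_apply,
      Finsupp.finset_sum_apply, Finsupp.smul_apply, smul_eq_mul] at h3
    rw [Finset.sum_eq_single_of_mem z₁ hz₁ (fun y hy hne => ?_)] at h3
    · rw [← hC_coe, C.repr_self, Finsupp.single_apply, if_pos rfl, mul_one] at h3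
      exact h3
    · rw [← hC_coe, C.repr_self, Finsupp.single_apply,
        if_neg (fun h => hne (hpr.2.1 y hy z₁ hz₁ h)), mul_zero]
  -- the corrected vector u
  set u : A.V := c x - ∑ z ∈ D, a (δ z) • c z with hu
  have hu_gr : u ∈ A.gr (degb x) := by
    refine sub_mem (hc1 x) (Submodule.sum_mem _ (fun z hz => ?_))
    rcases eq_or_ne (a (δ z)) 0 with h0 | h0
    · rw [h0, zero_smul]; exact Submodule.zero_mem _
    · have h1 : degb (δ z) = degb x + 1 := ha_deg _ h0
      have h2 : degb (δ z) = degb z + 1 := (hpr.2.2 z hz).2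
      have h3 : degb z = degb x := by omega
      exact Submodule.smul_mem _ _ (h3 ▸ hc1 z)
  have hu_flag1 : u ∈ A.flag (m + 1) := by
    refine sub_mem (hc2 x) (Submodule.sum_mem _ (fun z hz => Submodule.smul_mem _ _ ?_))
    exact A.flag_mono (by have := hDm z hz; omega) (hc2 z)
  have hu_flag2 : u ∉ A.flag m := by
    intro hmem
    apply hc3 x
    have : c x = u + ∑ z ∈ D, a (δ z) • c z := by rw [hu]; abel
    rw [show ((x : ℕ)) = m from rfl, this]
    refine add_mem hmem (Submodule.sum_mem _ (fun z hz => Submodule.smul_mem _ _ ?_))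
    exact A.flag_mono (by have := hDm z hz; omega) (hc2 z)
  -- the new differential value and its coefficients
  set a' := C.repr (d u) with ha'
  have hdu_eq : d u = w - ∑ z ∈ D, a (δ z) • c (δ z) := by
    rw [hu, map_sub, map_sum]
    congr 1
    refine Finset.sum_congr rfl (fun z hz => ?_)
    rw [map_smul, hrel z (hDm z hz), if_pos hz]
  have ha'_eval : ∀ z₂ : Fin n,
      a' z₂ = a z₂ - ∑ z ∈ D, a (δ z) * (if δ z = z₂ then 1 else 0) := by
    intro z₂
    rw [ha', hdu_eq, map_sub, map_sum, Finsupp.sub_apply, Finsupp.finset_sum_apply]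
    congr 1
    refine Finset.sum_congr rfl (fun z hz => ?_)
    rw [map_smul, Finsupp.smul_apply, smul_eq_mul, ← hC_coe, C.repr_self,
      Finsupp.single_apply]
  have ha'_im : ∀ z ∈ D, a' (δ z) = 0 := by
    intro z hz
    rw [ha'_eval, Finset.sum_eq_single_of_mem z hz (fun y hy hne => ?_)]
    · rw [if_pos rfl, mul_one, sub_self]
    · rw [if_neg (fun h => hne (hpr.2.1 y hy z hz h)), mul_zero]
  have ha'_nim : ∀ z₂ : Fin n, (∀ z ∈ D, δ z ≠ z₂) → a' z₂ = a z₂ := by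
    intro z₂ hno
    rw [ha'_eval, Finset.sum_eq_zero (fun z hz => by rw [if_neg (hno z hz), mul_zero]),
      sub_zero]
  have ha'_lt : ∀ z, a' z ≠ 0 → (z : ℕ) < m := by
    intro z hz
    rcases em (∃ y ∈ D, δ y = z) with ⟨y, hy, rfl⟩ | hno
    · exact absurd (ha'_im y hy) hz
    · push_neg at hno
      exact ha_lt z (ha'_nim z hno ▸ hz)
  have ha'_deg : ∀ z, a' z ≠ 0 → degb z = degb x + 1 := by
    intro z hz
    rcases em (∃ y ∈ D, δ y = z) with ⟨y, hy, rfl⟩ | hno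
    · exact absurd (ha'_im y hy) hz
    · push_neg at hno
      exact ha_deg z (ha'_nim z hno ▸ hz)
  have ha'_D : ∀ z ∈ D, a' z = 0 := by
    intro z hz
    have hno : ∀ y ∈ D, δ y ≠ z := fun y hy heq => (hpr.1 y hy) (heq ▸ hz)
    rw [ha'_nim z hno]
    exact ha_D z hz
  rcases eq_or_ne (d u) 0 with hdu0 | hdu0
  · -- case A : no new pair
    refine ⟨Function.update c x u, D, δ, ?_, ?_, ?_, hpr, fun z hz => Nat.lt_succ_of_lt (hDm z hz), ?_⟩
    · intro z
      rcases eq_or_ne z x with rfl | hzx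
      · rw [Function.update_self]; exact hu_gr
      · rw [Function.update_of_ne hzx]; exact hc1 z
    · intro z
      rcases eq_or_ne z x with rfl | hzx
      · rw [Function.update_self]; exact hu_flag1
      · rw [Function.update_of_ne hzx]; exact hc2 z
    · intro z
      rcases eq_or_ne z x with rfl | hzx
      · rw [Function.update_self]; exact hu_flag2
      · rw [Function.update_of_ne hzx]; exact hc3 z
    · intro z hz
      rcases eq_or_ne z x with rfl | hzx
      · have hzD : x ∉ D := fun h => absurd (hDm x h) (lt_irrefl m)
        rw [Function.update_self, if_neg hzD, hdu0]
      · have hzm : (z : ℕ) < m := by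
          have : (z : ℕ) ≠ m := fun h => hzx (Fin.ext h)
          omega
        rw [Function.update_of_ne hzx, hrel z hzm]
        split_ifs with hzD
        · have h1 : ((δ z : Fin n) : ℕ) < (z : ℕ) := (hpr.2.2 z hzD).1
          have hδzx : δ z ≠ x := by
            intro h
            have h2 : ((δ z : Fin n) : ℕ) = m := by rw [h]
            omega
          rw [Function.update_of_ne hδzx]
        · rfl
  · -- case B : new pair (x, z₀)
    have hxm : (x : ℕ) = m := rfl
    have hne : a'.support.Nonempty := by
      rw [Finsupp.support_nonempty_iff]
      intro h
      have h' : C.repr (d u) = 0 := h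
      exact hdu0 ((LinearEquiv.map_eq_zero_iff C.repr).mp h')
    set z₀ : Fin n := a'.support.max' hne with hz₀
    have hz₀mem : a' z₀ ≠ 0 := Finsupp.mem_support_iff.mp (a'.support.max'_mem hne)
    have hz₀lt : (z₀ : ℕ) < m := ha'_lt _ hz₀mem
    have hz₀deg : degb z₀ = degb x + 1 := ha'_deg _ hz₀mem
    have hz₀D : z₀ ∉ D := fun h => hz₀mem (ha'_D _ h)
    have hz₀im : ∀ z ∈ D, δ z ≠ z₀ := fun z hz heq => hz₀mem (heq ▸ ha'_im z hz)
    have hxz₀ : z₀ ≠ x := by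
      intro h
      have h2 : (z₀ : ℕ) = m := by rw [h]
      omega
    have hmemx : ∀ z ∈ D, z ≠ x := by
      intro z hz he
      have h1 := hDm z hz
      rw [he] at h1
      omega
    have hδx : ∀ z ∈ D, δ z ≠ x := by
      intro z hz he
      have h1 : ((δ z : Fin n) : ℕ) < (z : ℕ) := (hpr.2.2 z hz).1
      have h2 := hDm z hz
      have h3 : ((δ z : Fin n) : ℕ) = m := by rw [he]
      omega
    set c' : Fin n → A.V := Function.update (Function.update c x u) z₀ (d u) with hc'
    have hc'x : c' x = u := by
      rw [hc', Function.update_of_ne hxz₀.symm, Function.update_self]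
    have hc'z₀ : c' z₀ = d u := by rw [hc', Function.update_self]
    have hc'other : ∀ z : Fin n, z ≠ x → z ≠ z₀ → c' z = c z := by
      intro z h1 h2
      rw [hc', Function.update_of_ne h2, Function.update_of_ne h1]
    have hnotin : z₀ ∉ insert x D := by
      intro h
      rcases Finset.mem_insert.mp h with h2 | h2
      · exact hxz₀ h2
      · exact hz₀D h2
    refine ⟨c', insert x D, Function.update δ x z₀, ?_, ?_, ?_, ⟨?_, ?_, ?_⟩, ?_, ?_⟩
    · -- homogeneous
      intro z
      rcases eq_or_ne z z₀ with h | h1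
      · rw [h, hc'z₀, hz₀deg]
        exact hd.1 (degb x) ⟨u, hu_gr, rfl⟩
      rcases eq_or_ne z x with h | h2
      · rw [h, hc'x]; exact hu_gr
      · rw [hc'other z h2 h1]; exact hc1 z
    · -- in flag (z+1)
      intro z
      rcases eq_or_ne z z₀ with h | h1
      · rw [h, hc'z₀]
        refine (hmemflag (d u) ((z₀ : ℕ) + 1)).mpr (fun y hy => ?_)
        have h2 : y ≤ z₀ := Finset.le_max' _ y (Finsupp.mem_support_iff.mpr hy)
        have h3 : (y : ℕ) ≤ (z₀ : ℕ) := h2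
        omega
      rcases eq_or_ne z x with h | h2
      · rw [h, hc'x]; exact hu_flag1
      · rw [hc'other z h2 h1]; exact hc2 z
    · -- not in flag z
      intro z
      rcases eq_or_ne z z₀ with h | h1
      · rw [h, hc'z₀]
        intro hmem
        exact lt_irrefl _ ((hmemflag (d u) (z₀ : ℕ)).mp hmem z₀ hz₀mem)
      rcases eq_or_ne z x with h | h2
      · rw [h, hc'x]; exact hu_flag2
      · rw [hc'other z h2 h1]; exact hc3 z
    · -- PR (i)
      intro z hz
      rcases Finset.mem_insert.mp hz with h | h
      · rw [h, Function.update_self]; exact hnotin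
      · rw [Function.update_of_ne (hmemx z h)]
        intro hmem
        rcases Finset.mem_insert.mp hmem with h2 | h2
        · exact hδx z h h2
        · exact hpr.1 z h h2
    · -- PR (ii) injectivity
      intro z hz y hy heq
      rcases Finset.mem_insert.mp hz with h1 | h1 <;> rcases Finset.mem_insert.mp hy with h2 | h2
      · rw [h1, h2]
      · rw [h1, Function.update_self, Function.update_of_ne (hmemx y h2)] at heq
        exact absurd heq.symm (hz₀im y h2)
      · rw [h2, Function.update_self, Function.update_of_ne (hmemx z h1)] at heq
        exact absurd heq (hz₀im z h1)
      · rw [Function.update_of_ne (hmemx z h1), Function.update_of_ne (hmemx y h2)] at heq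
        exact hpr.2.1 z h1 y h2 heq
    · -- PR (iii)
      intro z hz
      rcases Finset.mem_insert.mp hz with h | h
      · rw [h, Function.update_self]
        constructor
        · rw [Fin.lt_def]
          omega
        · rw [hz₀deg]
      · rw [Function.update_of_ne (hmemx z h)]
        exact hpr.2.2 z h
    · -- bound m+1
      intro z hz
      rcases Finset.mem_insert.mp hz with h | h
      · rw [h]; omega
      · exact Nat.lt_succ_of_lt (hDm z h)
    · -- relations
      intro z hz
      rcases eq_or_ne z x with h | hzx
      · rw [h, hc'x, Function.update_self, if_pos (Finset.mem_insert_self x D), hc'z₀]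
      rcases eq_or_ne z z₀ with h | hzz₀
      · rw [h, hc'z₀, if_neg hnotin, hdd u]
      · have hzm : (z : ℕ) < m := by
          have : (z : ℕ) ≠ m := fun hh => hzx (Fin.ext hh)
          omega
        rw [hc'other z hzx hzz₀, hrel z hzm, Function.update_of_ne hzx]
        by_cases hzD : z ∈ D
        · rw [if_pos hzD, if_pos (Finset.mem_insert_of_mem hzD),
            hc'other (δ z) (hδx z hzD) (hz₀im z hzD)]
        · rw [if_neg hzD, if_neg (by
            intro hmem
            rcases Finset.mem_insert.mp hmem with h2 | h2
            · exact hzx h2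
            · exact hzD h2)]

lemma good_exists (d : A.V →ₗ[k] A.V) (hd : IsDiff A d) (hn : Module.finrank k A.V = n)
    (b : Basis (Fin n) k A.V) (degb : Fin n → ℤ)
    (hhom : ∀ x, b x ∈ A.gr (degb x))
    (hadapt : ∀ i : ℕ, A.flag i = span k (⇑b '' {x : Fin n | (x : ℕ) < i})) :
    ∀ m : ℕ, m ≤ n → ∃ c D δ, Good A n degb m d c D δ := by
  intro m
  induction m with
  | zero => exact fun _ => ⟨⇑b, ∅, id, good_zero b degb hhom hadapt d⟩
  | succ m ih =>
    intro hm
    obtain ⟨c, D, δ, hG⟩ := ih (Nat.le_of_succ_le hm)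
    exact good_step d hd hn degb m (Nat.lt_of_succ_le hm) c D δ hG

lemma pr_surj (d : A.V →ₗ[k] A.V) (hd : IsDiff A d)
    (b : Basis (Fin n) k A.V) (degb : Fin n → ℤ)
    (hhom : ∀ x, b x ∈ A.gr (degb x))
    (hadapt : ∀ i : ℕ, A.flag i = span k (⇑b '' {x : Fin n | (x : ℕ) < i})) :
    ∃ D δ, IsPR n degb D δ ∧ ConjDiff A (dOf b D δ) d := by
  have hn : Module.finrank k A.V = n := by
    rw [Module.finrank_eq_card_basis b, Fintype.card_fin]
  obtain ⟨c, D, δ, hc1, hc2, hc3, hpr, hDm, hrel⟩ :=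
    good_exists d hd hn b degb hhom hadapt n le_rfl
  set C : Basis (Fin n) k A.V := triBasis c hn hc2 hc3 with hC
  have hC_coe : ⇑C = c := funext (triBasis_apply c hn hc2 hc3)
  have hadaptC : ∀ i : ℕ, A.flag i = span k (⇑C '' {z : Fin n | (z : ℕ) < i}) := by
    intro i
    rw [hC_coe]
    exact flag_eq_span_prefix c hn hc2 hc3 i
  have hhomC : ∀ z, C z ∈ A.gr (degb z) := by
    intro z; rw [hC_coe]; exact hc1 z
  have hdeq : dOf C D δ = d := by
    apply C.ext
    intro z
    rw [dOf_apply, hC_coe, hrel z z.isLt]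
  refine ⟨D, δ, hpr, ?_⟩
  rw [← hdeq]
  exact dOf_conj_of_bases b C degb degb hhom hhomC hadapt hadaptC D δ

end GFS

/-- Let `V` be a flagged graded space of dimension `n` over `k`, with
a homogeneous basis `b` adapted to the flag, whose degrees `degb` give the grading of
the associated graded ordered set `X_V = (Fin n, degb)`.  Then `(D,δ) ↦ d(D,δ)` induces
a bijection between partial rulings of `X_V` and flag-decreasing differentials on `V`
modulo conjugation by grading- and flag-preserving automorphisms; in particular the
conjugation class of `d(D,δ)` does not depend on the choice of adapted homogeneous
basis. -/
theorem partial_rulings_biject_with_differentials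
    (k : Type) [Field k] (A : GFS k) (n : ℕ)
    (b : Module.Basis (Fin n) k A.V) (degb : Fin n → ℤ)
    (hhom : ∀ x, b x ∈ A.gr (degb x))
    (hadapt : ∀ i : ℕ, A.flag i = Submodule.span k (⇑b '' {x : Fin n | (x : ℕ) < i})) :
    -- (1) each `d(D,δ)` is a flag-decreasing differential:
    (∀ D δ, IsPR n degb D δ → IsDiff A (dOf b D δ)) ∧
    -- (2) injectivity: conjugate differentials come from equal partial rulings:
    (∀ D δ D' δ', IsPR n degb D δ → IsPR n degb D' δ' →
        ConjDiff A (dOf b D δ) (dOf b D' δ') → D = D' ∧ ∀ x ∈ D, δ x = δ' x) ∧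
    -- (3) surjectivity: every flag-decreasing differential is conjugate to some
    --     `d(D,δ)`:
    (∀ d : A.V →ₗ[k] A.V, IsDiff A d →
        ∃ D δ, IsPR n degb D δ ∧ ConjDiff A (dOf b D δ) d) ∧
    -- (4) independence of the choice of adapted homogeneous basis:
    (∀ (b' : Module.Basis (Fin n) k A.V) (degb' : Fin n → ℤ),
        (∀ x, b' x ∈ A.gr (degb' x)) →
        (∀ i : ℕ, A.flag i = Submodule.span k (⇑b' '' {x : Fin n | (x : ℕ) < i})) →
        ∀ D δ, IsPR n degb D δ → ConjDiff A (dOf b D δ) (dOf b' D δ)) := by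
  exact ⟨fun D δ hpr => GFS.dOf_isDiff b degb hhom hadapt D δ hpr,
    fun D δ D' δ' hpr hpr' hconj => GFS.pr_inj b degb hadapt D D' δ δ' hpr hpr' hconj,
    fun d hd => GFS.pr_surj d hd b degb hhom hadapt,
    fun b' degb' hhom' hadapt' D δ _ =>
      GFS.dOf_conj_of_bases b b' degb degb' hhom hhom' hadapt hadapt' D δ⟩
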